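/- Let (a, b, x) be positive integers with a > b > 3 satisfying 2^a + 2^b + 1 = x^2. If (a, b, x) is not of the form (2t, t+1, 2^t + 1) for a positive integer t, and (a, b, x) ≠ (5, 4, 7), and (a, b, x) ≠ (9, 4, 23), then a ≥ 6b − 8. -/
import Mathlib

private lemma two_pow_mul (x y z : ℕ) (h : x + y = z) : (2:ℕ)^x * 2^y = 2^z := by
  subst h; rw [pow_add]

private lemma four_mul_pow (x y : ℕ) (h : x + 2 = y) : (4:ℕ) * 2^x = 2^y := by
  subst h; rw [pow_add]; ring

private lemma two_mul_pow (x y : ℕ) (h : x + 1 = y) : (2:ℕ) * 2^x = 2^y := by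
  subst h; rw [pow_add]; ring

private lemma two_pow_le {x y : ℕ} (h : x ≤ y) : (2:ℕ)^x ≤ 2^y :=
  Nat.pow_le_pow_right (by norm_num) h

private lemma two_pow_pos' (x : ℕ) : 0 < (2:ℕ)^x := pow_pos (by norm_num) x

private lemma exp_lt_of_lt {x y : ℕ} (h : (2:ℕ)^x < 2^y) : x + 1 ≤ y := by
  by_contra h'
  exact absurd (two_pow_le (by omega)) (not_le.mpr h)

private lemma exp_le_of_le {x y : ℕ} (h : (2:ℕ)^x ≤ 2^y) : x ≤ y := by
  by_contra h'
  have h1 : (2:ℕ)^(y+1) ≤ 2^x := two_pow_le (by omega)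
  have h2 : (2:ℕ)^y < 2^(y+1) := by
    rw [pow_succ]; have := two_pow_pos' y; omega
  omega

theorem a_ge_six_b_sub_eight
    (a b x : ℕ) (ha : 0 < a) (hb : 3 < b) (hx : 0 < x) (hab : a > b)
    (heq : 2 ^ a + 2 ^ b + 1 = x ^ 2)
    (hnot1 : ¬∃ t : ℕ, 0 < t ∧ a = 2 * t ∧ b = t + 1 ∧ x = 2 ^ t + 1)
    (hnot2 : (a, b, x) ≠ (5, 4, 7)) (hnot3 : (a, b, x) ≠ (9, 4, 23)) :
    a ≥ 6 * b - 8 := by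
  obtain ⟨c, rfl⟩ : ∃ c, b = c + 4 := ⟨b - 4, by omega⟩
  obtain ⟨k, hk1, rfl⟩ : ∃ k, 1 ≤ k ∧ a = c + 4 + k := ⟨a - (c + 4), by omega, by omega⟩
  have hP : (4:ℕ) ≤ 2^(c+2) := by
    calc (4:ℕ) = 2^2 := rfl
    _ ≤ 2^(c+2) := two_pow_le (by omega)
  have e1 : (4:ℕ) * (2^(c+2) * 2^k) = 2^(c+4+k) := by
    rw [two_pow_mul (c+2) k (c+2+k) rfl, four_mul_pow (c+2+k) (c+4+k) (by omega)]
  have e2 : (4:ℕ) * 2^(c+2) = 2^(c+4) := four_mul_pow (c+2) (c+4) (by omega)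
  have r4 : (2:ℕ) * 2^(c+2) = 2^(c+3) := two_mul_pow (c+2) (c+3) rfl
  have r3 : (2:ℕ)^(c+2) * 2^(c+2) = 2^(2*c+4) := two_pow_mul _ _ _ (by omega)
  have hsq : 4*(2^(c+2)*2^k) + 4*2^(c+2) + 1 = x^2 := by rw [e1, e2]; exact heq
  -- x is odd
  have hxo : x % 2 = 1 := by
    rcases Nat.mod_two_eq_zero_or_one x with h | h
    · exfalso
      obtain ⟨y, hy⟩ := Nat.dvd_of_mod_eq_zero h
      rw [hy] at hsq
      have hyy : (2*y)^2 = 4*(y*y) := by ring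
      rw [hyy] at hsq
      omega
    · exact h
  obtain ⟨m, rfl⟩ : ∃ m, x = 2*m+1 := ⟨x/2, by omega⟩
  have hm1 : 1 ≤ m := by
    rcases Nat.eq_zero_or_pos m with h | h
    · exfalso
      rw [h] at hsq
      have hz : (2*0+1)^2 = 1 := by norm_num
      rw [hz] at hsq
      have h2 : 0 < 2^(c+2)*2^k := Nat.mul_pos (two_pow_pos' (c+2)) (two_pow_pos' k)
      omega
    · exact h
  have hmm : 2^(c+2) * (2^k + 1) = m * (m+1) := by
    have e3 : (2*m+1)^2 = 4*(m*(m+1)) + 1 := by ring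
    rw [e3] at hsq
    have e4 : 2^(c+2)*(2^k+1) = 2^(c+2)*2^k + 2^(c+2) := by ring
    have h4 : 4*(2^(c+2)*(2^k + 1)) = 4*(m*(m+1)) := by omega
    exact Nat.eq_of_mul_eq_mul_left (by norm_num) h4
  rcases Nat.mod_two_eq_zero_or_one m with hme | hme
  · -- CASE A : m even, so 2^(c+2) ∣ m ; x = 2^(c+3) s + 1
    have hcop : Nat.Coprime (2^(c+2)) (m+1) :=
      Nat.Coprime.pow_left _ (Nat.coprime_two_left.mpr (Nat.odd_iff.mpr (by omega)))
    have hdm : 2^(c+2) ∣ m :=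
      hcop.dvd_of_dvd_mul_right ⟨2^k+1, hmm.symm⟩
    obtain ⟨s, hms⟩ := hdm
    have hs1 : 1 ≤ s := by
      rcases Nat.eq_zero_or_pos s with h | h
      · exfalso; rw [h, mul_zero] at hms; omega
      · exact h
    have hA : 2^k + 1 = 2^(c+2) * s^2 + s := by
      have h5 : 2^(c+2) * (2^k+1) = 2^(c+2) * (2^(c+2)*s^2 + s) := by
        rw [hmm, hms]; ring
      exact Nat.eq_of_mul_eq_mul_left (two_pow_pos' _) h5
    rcases eq_or_lt_of_le hs1 with hseq | hs2
    · -- s = 1 : the excluded family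
      exfalso; apply hnot1
      rw [← hseq, one_pow, mul_one] at hA
      have hA1 : (2:ℕ)^k = 2^(c+2) := by omega
      have hk2 : k = c + 2 := Nat.pow_right_injective (le_refl 2) hA1
      refine ⟨c+3, by omega, by omega, by omega, ?_⟩
      rw [hms, ← hseq, mul_one, r4]
    · -- s ≥ 2
      obtain ⟨s1, rfl⟩ : ∃ s1, s = s1 + 1 := ⟨s - 1, by omega⟩
      have hs1' : 1 ≤ s1 := by omega
      have hk5 : c + 5 ≤ k := by
        have hs4 : 4 ≤ (s1+1)^2 := by nlinarith
        have h6 : 2^(c+2)*4 ≤ 2^(c+2)*(s1+1)^2 := Nat.mul_le_mul_left _ hs4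
        have h7 : (2:ℕ)^(c+4) < 2^k := by omega
        have := exp_lt_of_lt h7; omega
      have hdvd1 : 2^(c+2) ∣ s1 := by
        have d1 : (2:ℕ)^(c+2) ∣ 2^k := pow_dvd_pow 2 (by omega)
        have d2 : (2:ℕ)^(c+2) ∣ 2^(c+2)*(s1+1)^2 := dvd_mul_right _ _
        have h8 : 2^(c+2)*(s1+1)^2 + s1 = 2^k := by omega
        rw [← h8] at d1
        exact (Nat.dvd_add_right d2).mp d1
      obtain ⟨u, hsu⟩ := hdvd1
      have hu1 : 1 ≤ u := by
        rcases Nat.eq_zero_or_pos u with h | h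
        · exfalso; rw [h, mul_zero] at hsu; omega
        · exact h
      have hs3 : 2^(c+2) ≤ s1 := by
        have h9 : 2^(c+2)*1 ≤ 2^(c+2)*u := Nat.mul_le_mul_left _ hu1
        rw [mul_one] at h9; omega
      have hk37 : 3*c + 7 ≤ k := by
        have t1 : (2^(c+2)+1)^2 ≤ (s1+1)^2 := Nat.pow_le_pow_left (by omega) 2
        have t2 : ((2:ℕ)^(c+2)+1)^2 = 2^(c+2)*2^(c+2) + 2*2^(c+2) + 1 := by ring
        have t5 : 2^(c+2) * (2^(2*c+4)+1) ≤ 2^(c+2) * (s1+1)^2 := by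
          apply Nat.mul_le_mul_left
          omega
        have t4 : (2:ℕ)^(c+2) * 2^(2*c+4) = 2^(3*c+6) := two_pow_mul _ _ _ (by omega)
        have t7 : (2:ℕ)^(c+2)*(2^(2*c+4)+1) = 2^(3*c+6) + 2^(c+2) := by
          rw [mul_add, t4, mul_one]
        have t6 : (2:ℕ)^(3*c+6) < 2^k := by omega
        have := exp_lt_of_lt t6; omega
      obtain ⟨j, rfl⟩ : ∃ j, k = c + 2 + j := ⟨k - (c+2), by omega⟩
      have hj : 2*c + 5 ≤ j := by omega
      have q1 : (2:ℕ)^(c+2) * 2^j = 2^(c+2+j) := two_pow_mul _ _ _ rfl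
      have hA2 : 2^j = 2^(2*c+4)*u^2 + 2^(c+3)*u + (u + 1) := by
        have q2 : 2^(c+2)*(s1+1)^2 + (s1+1)
            = 2^(c+2)*(2^(2*c+4)*u^2 + 2^(c+3)*u + (u+1)) + 1 := by
          rw [hsu, ← r3, ← r4]; ring
        have q3 : 2^(c+2) * 2^j = 2^(c+2) * (2^(2*c+4)*u^2 + 2^(c+3)*u + (u+1)) := by
          omega
        exact Nat.eq_of_mul_eq_mul_left (two_pow_pos' _) q3
      have hdvd2 : 2^(c+3) ∣ u + 1 := by
        have d1 : (2:ℕ)^(c+3) ∣ 2^j := pow_dvd_pow 2 (by omega)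
        have d2 : (2:ℕ)^(c+3) ∣ 2^(2*c+4)*u^2 + 2^(c+3)*u :=
          dvd_add ((pow_dvd_pow 2 (by omega)).mul_right _) (dvd_mul_right _ _)
        rw [hA2] at d1
        exact (Nat.dvd_add_right d2).mp d1
      obtain ⟨v, huv⟩ := hdvd2
      have hv1 : 1 ≤ v := by
        rcases Nat.eq_zero_or_pos v with h | h
        · exfalso; rw [h, mul_zero] at huv; omega
        · exact h
      rcases eq_or_lt_of_le hv1 with hveq | hv2
      · -- v = 1 : contradiction by parity
        exfalso
        have hu' : u + 1 = 2^(c+3) := by rw [← hveq, mul_one] at huv; exact huv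
        have r5 : (2:ℕ)^(c+3)*2^(c+3) = 2^(2*c+6) := two_pow_mul _ _ _ (by omega)
        have r6 : (2:ℕ)^(2*c+4)*4 = 2^(2*c+6) := by
          rw [mul_comm]; exact four_mul_pow _ _ (by omega)
        have hA3 : 2^j = 2^(2*c+4)*(u^2 + 4) := by
          have w2 : (2:ℕ)^(c+3)*u + 2^(c+3) = 2^(c+3)*(u+1) := by ring
          have w3 : (2:ℕ)^(c+3)*(u+1) = 2^(2*c+6) := by rw [hu', r5]
          have w4 : (2:ℕ)^(2*c+4)*(u^2+4) = 2^(2*c+4)*u^2 + 2^(2*c+6) := by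
            rw [mul_add, r6]
          omega
        have huo : u % 2 = 1 := by
          have hde : (2:ℕ) ∣ 2^(c+3) := dvd_pow_self 2 (by omega)
          omega
        obtain ⟨i, rfl⟩ : ∃ i, j = 2*c+4 + (i+1) := ⟨j - (2*c+5), by omega⟩
        have hc2 : (2:ℕ)^(i+1) = u^2 + 4 := by
          apply Nat.eq_of_mul_eq_mul_left (two_pow_pos' (2*c+4))
          rw [two_pow_mul (2*c+4) (i+1) _ rfl]; exact hA3
        have d1 : (2:ℕ) ∣ 2^(i+1) := dvd_pow_self 2 (by omega)
        have hu2 : u^2 % 2 = 1 := by rw [Nat.pow_mod, huo]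
        omega
      · -- v ≥ 2 : big branch, a ≥ 6b-8
        have hu3 : 2^(c+3) ≤ u := by
          have h9 : 2^(c+3)*2 ≤ 2^(c+3)*v := Nat.mul_le_mul_left _ hv2
          have r7 : (2:ℕ)^(c+3)*2 = 2^(c+4) := by
            rw [mul_comm]; exact two_mul_pow (c+3) _ rfl
          have r8 : (2:ℕ)^(c+3) + 2^(c+3) = 2^(c+4) := by
            have h10 := two_mul_pow (c+3) (c+4) rfl; omega
          omega
        have hsbig : 2^(2*c+5) ≤ s1 := by
          have h10 : 2^(c+2)*2^(c+3) ≤ 2^(c+2)*u := Nat.mul_le_mul_left _ hu3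
          have r9 : (2:ℕ)^(c+2)*2^(c+3) = 2^(2*c+5) := two_pow_mul _ _ _ (by omega)
          omega
        have t1 : ((2:ℕ)^(2*c+5))^2 ≤ (s1+1)^2 := Nat.pow_le_pow_left (by omega) 2
        have t2 : ((2:ℕ)^(2*c+5))^2 = 2^(4*c+10) := by
          rw [← pow_mul, show (2*c+5)*2 = 4*c+10 from by ring]
        have t3 : (2:ℕ)^(c+2)*2^(4*c+10) = 2^(5*c+12) := two_pow_mul _ _ _ (by omega)
        have t4 : 2^(c+2)*2^(4*c+10) ≤ 2^(c+2)*(s1+1)^2 := Nat.mul_le_mul_left _ (by omega)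
        have t5 : (2:ℕ)^(5*c+12) ≤ 2^(c+2+j) := by omega
        have := exp_le_of_le t5
        omega
  · -- CASE B : m odd, so 2^(c+2) ∣ m+1 ; x = 2^(c+3) s - 1
    have hcop : Nat.Coprime (2^(c+2)) m :=
      Nat.Coprime.pow_left _ (Nat.coprime_two_left.mpr (Nat.odd_iff.mpr hme))
    have hdm : 2^(c+2) ∣ m + 1 :=
      hcop.dvd_of_dvd_mul_left ⟨2^k+1, hmm.symm⟩
    obtain ⟨s, hms⟩ := hdm
    have hs1 : 1 ≤ s := by
      rcases Nat.eq_zero_or_pos s with h | h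
      · exfalso; rw [h, mul_zero] at hms; omega
      · exact h
    have h2 : 2^k + 1 = m*s := by
      have h1 : 2^(c+2)*(2^k+1) = 2^(c+2)*(m*s) := by
        rw [hmm, hms]; ring
      exact Nat.eq_of_mul_eq_mul_left (two_pow_pos' _) h1
    have hB : 2^k + 1 + s = 2^(c+2)*s^2 := by
      have h3 : (m+1)*s = 2^(c+2)*s^2 := by rw [hms]; ring
      have h4 : (m+1)*s = m*s + s := by ring
      omega
    have hso : s % 2 = 1 := by
      have hd : s ∣ 2^k + 1 := ⟨m, by rw [h2, mul_comm]⟩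
      rcases Nat.mod_two_eq_zero_or_one s with h | h
      · exfalso
        have h2s : 2 ∣ s := Nat.dvd_of_mod_eq_zero h
        have h2d := dvd_trans h2s hd
        have h2k : (2:ℕ) ∣ 2^k := dvd_pow_self 2 (by omega)
        omega
      · exact h
    rcases eq_or_lt_of_le hs1 with hseq | hs2
    · -- s = 1 : (5,4,7)
      rw [← hseq, one_pow, mul_one] at hB
      have hB1 : (2:ℕ)^k + 2 = 2^(c+2) := by omega
      rcases Nat.lt_or_ge k 2 with hk2 | hk2
      · have hk' : k = 1 := by omega
        rw [hk', pow_one] at hB1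
        have h44 : (2:ℕ)^2 = 2^(c+2) := by
          rw [show (2:ℕ)^2 = 4 from rfl]; omega
        have hc0 : c = 0 := by
          have := Nat.pow_right_injective (le_refl 2) h44; omega
        exfalso; apply hnot2
        subst hc0; subst hk'
        have hm3 : m = 3 := by
          rw [← hseq, mul_one] at hms
          norm_num at hms
          omega
        subst hm3; rfl
      · exfalso
        have d1 : (4:ℕ) ∣ 2^k := by
          have hdd := pow_dvd_pow 2 hk2
          rwa [show (2:ℕ)^2 = 4 from rfl] at hdd
        have d2 : (4:ℕ) ∣ 2^(c+2) := by
          have hdd := pow_dvd_pow 2 (show 2 ≤ c+2 by omega)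
          rwa [show (2:ℕ)^2 = 4 from rfl] at hdd
        omega
    · -- s ≥ 2, and s odd so s ≥ 3
      have hs3 : 3 ≤ s := by omega
      obtain ⟨s1, rfl⟩ : ∃ s1, s = s1 + 1 := ⟨s - 1, by omega⟩
      have hs1' : 2 ≤ s1 := by omega
      have hk5 : c + 5 ≤ k := by
        have f1 : 4*(s1+1) ≤ 2^(c+2)*(s1+1) := Nat.mul_le_mul_right _ hP
        have f2 : 2^(c+2)*(3*(s1+1)) ≤ 2^(c+2)*(s1+1)^2 := by
          apply Nat.mul_le_mul_left
          rw [pow_two]; exact Nat.mul_le_mul_right (s1+1) hs3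
        have f3 : 2^(c+2)*(3*(s1+1)) = 3*(2^(c+2)*(s1+1)) := by ring
        have f5 : 2^(c+2)*3 ≤ 2^(c+2)*(s1+1) := Nat.mul_le_mul_left _ hs3
        have h7 : (2:ℕ)^(c+4) < 2^k := by omega
        have := exp_lt_of_lt h7; omega
      have hdvd1 : 2^(c+2) ∣ 1 + (s1+1) := by
        have d1 : (2:ℕ)^(c+2) ∣ 2^k := pow_dvd_pow 2 (by omega)
        have d2 : (2:ℕ)^(c+2) ∣ 2^(c+2)*(s1+1)^2 := dvd_mul_right _ _
        have e : 2^k + (1 + (s1+1)) = 2^(c+2)*(s1+1)^2 := by omega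
        rw [← e] at d2
        exact (Nat.dvd_add_right d1).mp d2
      obtain ⟨u, hsu⟩ := hdvd1
      have hu1 : 1 ≤ u := by
        rcases Nat.eq_zero_or_pos u with h | h
        · exfalso; rw [h, mul_zero] at hsu; omega
        · exact h
      have hk2' : 2*c + 5 ≤ k := by
        have f0 : 2^(c+2) ≤ 1 + (s1+1) := by
          have h9 : 2^(c+2)*1 ≤ 2^(c+2)*u := Nat.mul_le_mul_left _ hu1
          rw [mul_one] at h9; omega
        have g1 : 2^(c+2)*2^(c+2) ≤ (1+(s1+1))*(1+(s1+1)) := Nat.mul_le_mul f0 f0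
        have g2 : (1+(s1+1))*(1+(s1+1)) = (s1+1)^2 + 2*(s1+1) + 1 := by ring
        have g3 : 4*(s1+1)^2 ≤ 2^(c+2)*(s1+1)^2 := Nat.mul_le_mul_right _ hP
        have g4 : (s1+1)^2 = (s1+1)*(s1+1) := by rw [pow_two]
        have g5 : 3*(s1+1) ≤ (s1+1)*(s1+1) := Nat.mul_le_mul_right (s1+1) hs3
        have hgoal : 2^(c+2)*2^(c+2) < 2^k := by omega
        rw [r3] at hgoal
        have := exp_lt_of_lt hgoal; omega
      obtain ⟨j, rfl⟩ : ∃ j, k = c + 2 + j := ⟨k - (c+2), by omega⟩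
      have hj : c + 3 ≤ j := by omega
      have q1 : (2:ℕ)^(c+2) * 2^j = 2^(c+2+j) := two_pow_mul _ _ _ rfl
      have hju : 2^j + u = (s1+1)^2 := by
        apply Nat.eq_of_mul_eq_mul_left (two_pow_pos' (c+2))
        rw [mul_add, q1, ← hsu]
        omega
      have hsq2 : (1+(s1+1))^2 = 2^(2*c+4)*u^2 := by
        rw [hsu, mul_pow, ← pow_mul, show (c+2)*2 = 2*c+4 from by ring]
      have e5 : (1+(s1+1))^2 = (s1+1)^2 + (2*(s1+1) + 1) := by ring
      have e6 : 2*(1+(s1+1)) = 2^(c+3)*u := by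
        rw [hsu, ← mul_assoc, r4]
      have hB2 : 2^j + u + 2^(c+3)*u = 2^(2*c+4)*u^2 + 1 := by omega
      obtain ⟨u1, rfl⟩ : ∃ u1, u = u1 + 1 := ⟨u - 1, by omega⟩
      have hdvd2 : 2^(c+3) ∣ u1 := by
        have d1 : (2:ℕ)^(c+3) ∣ 2^j := pow_dvd_pow 2 (by omega)
        have d2 : (2:ℕ)^(c+3) ∣ 2^(c+3)*(u1+1) := dvd_mul_right _ _
        have d3 : (2:ℕ)^(c+3) ∣ 2^(2*c+4)*(u1+1)^2 := (pow_dvd_pow 2 (by omega)).mul_right _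
        have e : 2^j + 2^(c+3)*(u1+1) + u1 = 2^(2*c+4)*(u1+1)^2 := by omega
        rw [← e] at d3
        exact (Nat.dvd_add_right (dvd_add d1 d2)).mp d3
      obtain ⟨w, huw⟩ := hdvd2
      rcases Nat.eq_zero_or_pos w with hw0 | hw1
      · -- u = 1 : this is (9,4,23) when c = 0, impossible otherwise
        rw [hw0, mul_zero] at huw
        subst huw
        simp only [Nat.zero_add, one_pow, mul_one] at hB2
        have hB3 : 2^j + 2^(c+3) = 2^(2*c+4) := by omega
        obtain ⟨i, rfl⟩ : ∃ i, j = c+3+i := ⟨j - (c+3), by omega⟩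
        have q : (2:ℕ)^i + 1 = 2^(c+1) := by
          apply Nat.eq_of_mul_eq_mul_left (two_pow_pos' (c+3))
          rw [mul_add, mul_one, two_pow_mul (c+3) i _ rfl,
              two_pow_mul (c+3) (c+1) (2*c+4) (by omega)]
          exact hB3
        rcases Nat.eq_zero_or_pos i with hi0 | hi1
        · have hc0 : c = 0 := by
            subst hi0
            rw [pow_zero] at q
            have h22 : (2:ℕ)^1 = 2^(c+1) := by rw [pow_one]; omega
            have := Nat.pow_right_injective (le_refl 2) h22; omega
          exfalso; apply hnot3
          subst hc0; subst hi0
          have hs12 : s1 = 2 := by omega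
          have hm11 : m = 11 := by omega
          subst hm11; rfl
        · exfalso
          have d1 : (2:ℕ) ∣ 2^i := dvd_pow_self 2 (by omega)
          have d2 : (2:ℕ) ∣ 2^(c+1) := dvd_pow_self 2 (by omega)
          omega
      · -- w ≥ 1 : big branch
        have hu2 : 2^(c+3) ≤ u1 := by
          have h9 : 2^(c+3)*1 ≤ 2^(c+3)*w := Nat.mul_le_mul_left _ hw1
          rw [mul_one] at h9; omega
        have hs4 : 2^(2*c+5) + 2 ≤ s1 := by
          have h10 : 2^(c+2)*(2^(c+3)+1) ≤ 2^(c+2)*(u1+1) := Nat.mul_le_mul_left _ (by omega)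
          have r : (2:ℕ)^(c+2)*(2^(c+3)+1) = 2^(2*c+5) + 2^(c+2) := by
            rw [mul_add, mul_one, two_pow_mul (c+2) (c+3) (2*c+5) (by omega)]
          omega
        have t1 : (s1+1) + 1 ≤ 2^(c+2)*(s1+1) := by
          have h9 : 4*(s1+1) ≤ 2^(c+2)*(s1+1) := Nat.mul_le_mul_right _ hP
          omega
        have g1 : 2^(c+2)*(s1+1)^2 = 2^(c+2)*(s1+1)*s1 + 2^(c+2)*(s1+1) := by ring
        have g3 : 2^(3*c+7) ≤ 2^(c+2)*(s1+1) := by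
          have h11 : 2^(c+2)*2^(2*c+5) ≤ 2^(c+2)*(s1+1) := Nat.mul_le_mul_left _ (by omega)
          rwa [two_pow_mul (c+2) (2*c+5) (3*c+7) (by omega)] at h11
        have g4 : 2^(5*c+12) ≤ 2^(c+2)*(s1+1)*s1 := by
          have h12 := Nat.mul_le_mul g3 (show (2:ℕ)^(2*c+5) ≤ s1 by omega)
          rwa [two_pow_mul (3*c+7) (2*c+5) (5*c+12) (by omega)] at h12
        have t5 : (2:ℕ)^(5*c+12) ≤ 2^(c+2+j) := by omega
        have := exp_le_of_le t5
        omega
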